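/- Let r be a balanced two-state rotor type with period 2n. Then for every m ≥ 1, the position of the m-th occurrence of target 4 in the infinite hitting sequence UD(r) equals F(G(f(g(m)))) + m. -/

import Mathlib

open scoped Classical

/-! ### Periodic sequences and rotor types

A rotor type is modelled as a function `f : ℕ → ℕ` (0-based reindexing of the paper's
sequence `r(1), r(2), …`, so the paper's `r(k)` is `f (k-1)`), together with its minimal
period `n`.  The states of the rotor are the values occurring in one period. -/

def IsPeriodicWith {α : Type*} (f : ℕ → α) (n : ℕ) : Prop := ∀ k, f (k + n) = f k

def IsMinimalPeriod {α : Type*} (f : ℕ → α) (n : ℕ) : Prop :=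
  0 < n ∧ IsPeriodicWith f n ∧ ∀ m, 0 < m → IsPeriodicWith f m → n ≤ m

noncomputable def minPeriod {α : Type*} (f : ℕ → α) : ℕ :=
  sInf {n | 0 < n ∧ IsPeriodicWith f n}

/-- `f` (with period `n`) reads the same forwards and backwards:
`r(k) = r(n+1-k)` for `1 ≤ k ≤ n`, written 0-based. -/
def Palindromic (f : ℕ → ℕ) (n : ℕ) : Prop := ∀ k < n, f k = f (n - 1 - k)

/-- `f` (with period `n`) is block-repetitive with block length `m`. -/
def BlockRepetitive (f : ℕ → ℕ) (n m : ℕ) : Prop :=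
  2 ≤ m ∧ m ∣ n ∧ ∀ k : ℕ, ∀ j < m, f (k * m + j) = f (k * m)

def Boppy (f : ℕ → ℕ) (n : ℕ) : Prop := Palindromic f n ∨ ∃ m, BlockRepetitive f n m

/-- The set of states of a rotor type of period `n`. -/
def states (f : ℕ → ℕ) (n : ℕ) : Finset ℕ := (Finset.range n).image f

/-- Number of occurrences of the state `v` among the first `n` terms of `f`. -/
noncomputable def countIn (f : ℕ → ℕ) (n v : ℕ) : ℕ :=
  ((Finset.range n).filter (fun k => f k = v)).card

/-- Merging reduction `s → s'`: replace every occurrence of `s` by `s'`. -/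
def merge (f : ℕ → ℕ) (s s' : ℕ) : ℕ → ℕ := fun k => if f k = s then s' else f k

/-- Destructive reduction `x(s)`: delete every occurrence of `s` and re-index. -/
noncomputable def destroy (f : ℕ → ℕ) (s : ℕ) : ℕ → ℕ :=
  fun k => f (Nat.nth (fun i => f i ≠ s) k)

/-- A two-state rotor type with states `1` and `2`, both occurring. -/
def TwoState (f : ℕ → ℕ) : Prop :=
  (∀ k, f k = 1 ∨ f k = 2) ∧ (∃ k, f k = 1) ∧ (∃ k, f k = 2)

/-! ### The compressor

The particle's trajectory alternates: at step `t` (0-based) the source `v1` fires its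
`(t+1)`-st term `f t`; if it is `1`, the particle moves to `v2`, whose firing count so far
is the number of `1`'s among `f 0, …, f (t-1)`; if it is `2`, it moves to `v3` similarly.
From `v2`/`v3` the particle either returns to the source (no target hit) or hits target
`4`/`5` and restarts at the source.  `X Y : Bool` encode the variation, `true` = `U`:
at `v2` state `1` routes up to `v1` iff `X = true`; at `v3` state `1` routes up iff
`Y = true`. -/

noncomputable def hitAt (X Y : Bool) (r : ℕ → ℕ) (t : ℕ) : Option ℕ :=
  if r t = 1 then
    (if decide (r (countIn r t 1) = 1) ≠ X then some 4 else none)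
  else
    (if decide (r (countIn r t 2) = 1) ≠ Y then some 5 else none)

/-- The hitting sequence of the compressor variation `XY` on rotor type `r`:
the subsequence of recorded targets (`4` or `5`), in order. -/
noncomputable def compSeq (X Y : Bool) (r : ℕ → ℕ) : ℕ → ℕ :=
  fun k => (hitAt X Y r (Nat.nth (fun t => (hitAt X Y r t).isSome = true) k)).getD 4

noncomputable def UUseq (r : ℕ → ℕ) : ℕ → ℕ := compSeq true true r
noncomputable def UDseq (r : ℕ → ℕ) : ℕ → ℕ := compSeq true false r
noncomputable def DUseq (r : ℕ → ℕ) : ℕ → ℕ := compSeq false true r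
noncomputable def DDseq (r : ℕ → ℕ) : ℕ → ℕ := compSeq false false r

/-- The compressor output with targets `4, 5` relabelled as states `1, 2`. -/
noncomputable def compOp (X Y : Bool) (r : ℕ → ℕ) : ℕ → ℕ := fun k => compSeq X Y r k - 3

noncomputable def UUop (r : ℕ → ℕ) : ℕ → ℕ := compOp true true r
noncomputable def UDop (r : ℕ → ℕ) : ℕ → ℕ := compOp true false r
noncomputable def DUop (r : ℕ → ℕ) : ℕ → ℕ := compOp false true r
noncomputable def DDop (r : ℕ → ℕ) : ℕ → ℕ := compOp false false r

/-- A finite composition of compressor operations (each given by its pair of letters),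
with the targets relabelled back to `1, 2` after each application. -/
noncomputable def applyOps (ops : List (Bool × Bool)) (r : ℕ → ℕ) : ℕ → ℕ :=
  ops.foldl (fun s o => compOp o.1 o.2 s) r

/-- The hitting sequence of the depth-2 binary tree network `BT` on `r`
(targets `1,2,3,4`): every firing of the source produces a hit. -/
noncomputable def BTseq (r : ℕ → ℕ) : ℕ → ℕ :=
  fun t => if r t = 1 then (if r (countIn r t 1) = 1 then 1 else 2)
           else (if r (countIn r t 2) = 1 then 3 else 4)

/-- Two sequences are equivalent if one is obtained from the other by a relabelling
that is injective on the values of the first (a bijective relabelling of states). -/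
def SeqEquiv {α β : Type*} (f : ℕ → α) (g : ℕ → β) : Prop :=
  ∃ ρ : α → β, (∀ k, ρ (f k) = g k) ∧ ∀ k l, ρ (f k) = ρ (f l) → f k = f l

/-- Every aligned block of length `m` of `f` contains states `1` and `2` equally often
(`m = 2n` gives `2n`-balance). -/
def BalancedBlocks (f : ℕ → ℕ) (m : ℕ) : Prop :=
  ∀ k : ℕ, countIn (fun j => f (k * m + j)) m 1 = countIn (fun j => f (k * m + j)) m 2

/-- `f ≡_m g` : some relabelling of `f` (injective on states) has the same multiset of
entries as `g` on every aligned block of length `m`. -/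
def BlockEquiv (f g : ℕ → ℕ) (m : ℕ) : Prop :=
  ∃ ρ : ℕ → ℕ, (∀ k l, ρ (f k) = ρ (f l) ↔ f k = f l) ∧
    ∀ k : ℕ, (Multiset.range m).map (fun j => ρ (f (k * m + j))) =
             (Multiset.range m).map (fun j => g (k * m + j))

/-- `L` is a balanced run decomposition of one period (of length `p`) of `f`:
a list of positive run lengths summing to `p` such that each corresponding
consecutive run contains `1` and `2` equally often. -/
noncomputable def IsBRD (f : ℕ → ℕ) (p : ℕ) (L : List ℕ) : Prop :=
  L.sum = p ∧ (∀ a ∈ L, 0 < a) ∧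
  ∀ i : Fin L.length,
    countIn (fun j => f ((L.take i.1).sum + j)) (L.get i) 1 =
    countIn (fun j => f ((L.take i.1).sum + j)) (L.get i) 2

/-- `L` is a uniform run decomposition of one period (of length `p`) of `f`:
a list of positive run lengths summing to `p` such that each corresponding
consecutive run is constant. -/
def IsURD (f : ℕ → ℕ) (p : ℕ) (L : List ℕ) : Prop :=
  L.sum = p ∧ (∀ a ∈ L, 0 < a) ∧
  ∀ i : Fin L.length, ∀ j < L.get i, f ((L.take i.1).sum + j) = f ((L.take i.1).sum)

/-- The maximal number of runs in a BRD of `f` (period `p`). -/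
noncomputable def maxBRD (f : ℕ → ℕ) (p : ℕ) : ℕ :=
  sSup {m | ∃ L : List ℕ, IsBRD f p L ∧ L.length = m}

/-- The balance coefficient `b(f)` (with respect to period length `p`). -/
noncomputable def balCoeff (f : ℕ → ℕ) (p : ℕ) : ℚ := (maxBRD f p : ℚ) / (p : ℚ)

/-- The type of a run decomposition, as an infinite periodic sequence of run data. -/
def typeSeq (L : List ℕ) : ℕ → ℕ := fun i => L.getD (i % L.length) 0

/-- A BURD rotor: it has a BRD and a URD of the same type, i.e. the `i`-th balanced run
has length `2·b_i` where `b_i` is the length of the `i`-th uniform run. -/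
noncomputable def IsBURD (f : ℕ → ℕ) (p : ℕ) : Prop :=
  ∃ L M : List ℕ, IsBRD f p L ∧ IsURD f p M ∧ ∀ i, typeSeq L i = 2 * typeSeq M i

/-- The ba-frequency `m(f) = 2k/p` of an ab-ba sequence with period length `p`,
where `k` is the number of `21` blocks per period. -/
noncomputable def baFreq (f : ℕ → ℕ) (p : ℕ) : ℚ :=
  (2 * (((Finset.range (p / 2)).filter (fun j => f (2 * j) = 2)).card : ℚ)) / (p : ℚ)

/-! ### Rotor-router networks

A rotor-router network on a vertex type `V`: a source, a finite set of targets
(outdegree 0), and at every non-target vertex `v` the rotor pattern, recorded by the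
sequence `rotor v : ℕ → V` of heads of its successive out-edges.  The underlying digraph
has an edge `v → w` (for non-target `v`) iff `w` occurs in `v`'s rotor pattern. -/

structure RotorNetwork (V : Type) where
  source : V
  target : Finset V
  rotor : V → ℕ → V

namespace RotorNetwork

variable {V : Type} [DecidableEq V]

/-- One step of the particle dynamics on states `(current position, firing counts)`:
at a target, record it and restart at the source; at a non-target vertex `v`, fire the
next term of `v`'s rotor pattern. -/
noncomputable def step (N : RotorNetwork V) (s : V × (V → ℕ)) : V × (V → ℕ) :=
  if s.1 ∈ N.target then (N.source, s.2)
  else (N.rotor s.1 (s.2 s.1), Function.update s.2 s.1 (s.2 s.1 + 1))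

/-- The full trajectory of the particle, started at the source with all rotors fresh. -/
noncomputable def traj (N : RotorNetwork V) : ℕ → V × (V → ℕ)
  | 0 => (N.source, fun _ => 0)
  | t + 1 => N.step (N.traj t)

/-- The hitting sequence: the subsequence of targets visited, in order. -/
noncomputable def hitSeq (N : RotorNetwork V) : ℕ → V :=
  fun k => (N.traj (Nat.nth (fun t => (N.traj t).1 ∈ N.target) k)).1

/-- Adjacency of the underlying digraph. -/
def adj (N : RotorNetwork V) (v w : V) : Prop :=
  v ∉ N.target ∧ ∃ k, N.rotor v k = w

/-- A valid rotor-router network: the source is not a target, there is at least one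
target, and every non-target vertex can reach some target. -/
def Valid (N : RotorNetwork V) : Prop :=
  N.source ∉ N.target ∧ N.target.Nonempty ∧
  ∀ v : V, v ∉ N.target → ∃ t ∈ N.target, Relation.ReflTransGen N.adj v t

/-- The rotor pattern at `v` has type `r`: it is `e ∘ r` for some assignment `e` of
states to out-neighbours. -/
def HasType (N : RotorNetwork V) (v : V) (r : ℕ → ℕ) : Prop :=
  ∃ e : ℕ → V, ∀ k, N.rotor v k = e (r k)

end RotorNetwork

/-- The alternating rotor type `1, 2, 1, 2, …` of period `2`. -/
def rot12 : ℕ → ℕ := fun k => if k % 2 = 0 then 1 else 2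

/-- `r` is universal: every rotor type `r'` is, up to a bijective relabelling of states,
the hitting sequence of some finite rotor-router network all of whose rotors have type `r`. -/
noncomputable def Universal (r : ℕ → ℕ) : Prop :=
  ∀ (r' : ℕ → ℕ) (n' : ℕ), IsMinimalPeriod r' n' →
    ∃ (m : ℕ) (N : RotorNetwork (Fin m)), N.Valid ∧
      (∀ v, v ∉ N.target → N.HasType v r) ∧ SeqEquiv N.hitSeq r'

/-- The (1-based) position of the `m`-th occurrence of the state `v` in `f`
(`posOf f 1 = f`, `posOf f 2 = g` in the paper's notation; `countIn f · 1 = F`,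
`countIn f · 2 = G`). -/
noncomputable def posOf (f : ℕ → ℕ) (v m : ℕ) : ℕ := Nat.nth (fun k => f k = v) (m - 1) + 1

/-! ### Auxiliary lemmas for statement 14 -/

private lemma count_congr' {p q : ℕ → Prop} [DecidablePred p] [DecidablePred q]
    (h : ∀ k, p k ↔ q k) (n : ℕ) : Nat.count p n = Nat.count q n := by
  rw [Nat.count_eq_card_filter_range, Nat.count_eq_card_filter_range]
  congr 1
  exact Finset.filter_congr fun x _ => h x

private lemma countIn_eq_count (f : ℕ → ℕ) (n v : ℕ) :
    countIn f n v = Nat.count (fun k => f k = v) n := by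
  rw [Nat.count_eq_card_filter_range, countIn]

private lemma count_comp_nth (p s : ℕ → Prop) [DecidablePred p] [DecidablePred s]
    (hp : (setOf p).Infinite) (t0 : ℕ) :
    Nat.count (fun k => s (Nat.nth p k)) (Nat.count p t0) =
    Nat.count (fun t => p t ∧ s t) t0 := by
  have e1 : Nat.count (fun k => s (Nat.nth p k)) (Nat.count p t0)
      = ((Finset.range (Nat.count p t0)).filter (fun k => s (Nat.nth p k))).card :=
    Nat.count_eq_card_filter_range _ _
  rw [e1, Nat.count_eq_card_filter_range (fun t => p t ∧ s t) t0]
  apply Finset.card_nbij (fun k => Nat.nth p k)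
  · intro k hk
    simp only [Finset.mem_coe, Finset.mem_filter, Finset.mem_range] at hk ⊢
    exact ⟨Nat.nth_lt_of_lt_count hk.1, Nat.nth_mem_of_infinite hp k, hk.2⟩
  · exact (Nat.nth_injective hp).injOn
  · intro t ht
    simp only [Finset.mem_coe, Finset.mem_filter, Finset.mem_range] at ht
    refine ⟨Nat.count p t, ?_, Nat.nth_count ht.2.1⟩
    simp only [Finset.mem_coe, Finset.mem_filter, Finset.mem_range]
    refine ⟨Nat.count_strict_mono ht.2.1 ht.1, ?_⟩
    rw [Nat.nth_count ht.2.1]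
    exact ht.2.2

private lemma count_and_count (p s : ℕ → Prop) [DecidablePred p] [DecidablePred s]
    (hp : (setOf p).Infinite) (t0 : ℕ) :
    Nat.count (fun t => p t ∧ s (Nat.count p t)) t0 = Nat.count s (Nat.count p t0) := by
  have h := count_comp_nth p (fun t => s (Nat.count p t)) hp t0
  rw [count_congr' (q := s) (fun k => by rw [Nat.count_nth_of_infinite hp])] at h
  exact h.symm

private lemma count_or_disjoint (A B : ℕ → Prop) [DecidablePred A] [DecidablePred B]
    (h : ∀ t, ¬(A t ∧ B t)) (n : ℕ) :
    Nat.count (fun t => A t ∨ B t) n = Nat.count A n + Nat.count B n := by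
  rw [Nat.count_eq_card_filter_range, Nat.count_eq_card_filter_range,
    Nat.count_eq_card_filter_range]
  rw [show ((Finset.range n).filter fun t => A t ∨ B t)
      = ((Finset.range n).filter A) ∪ ((Finset.range n).filter B) by
    rw [← Finset.filter_or]]
  rw [Finset.card_union_of_disjoint]
  rw [Finset.disjoint_left]
  intro a ha hb
  simp only [Finset.mem_filter] at ha hb
  exact h a ⟨ha.2, hb.2⟩

private lemma infinite_of_periodic' (r : ℕ → ℕ) (n : ℕ) (hn : 0 < n)
    (hper : IsPeriodicWith r n) (v : ℕ) (hv : ∃ k, r k = v) :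
    {k | r k = v}.Infinite := by
  obtain ⟨k0, hk0⟩ := hv
  apply Set.infinite_of_injective_forall_mem (f := fun j : ℕ => k0 + j * n)
  · intro a b hab
    simp only [add_right_inj] at hab
    exact Nat.eq_of_mul_eq_mul_right hn hab
  · intro j
    induction j with
    | zero => simpa using hk0
    | succ i ih =>
      have : k0 + (i + 1) * n = (k0 + i * n) + n := by ring
      simpa [this, hper (k0 + i * n)] using ih

/-- For a balanced two-state rotor type `r` of period `2n`, the
(1-based) position of the `m`-th occurrence of target `4` in `UD(r)` equals
`F(G(f(g(m)))) + m`, where `f, g` give the positions of the `m`-th `1` and `2` in `r`,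
and `F(m), G(m)` count the `1`'s and `2`'s among the first `m` terms of `r`. -/
theorem statement14 (r : ℕ → ℕ) (n : ℕ) (hn : 0 < n) (h2 : TwoState r)
    (hmin : IsMinimalPeriod r (2 * n))
    (hbal : countIn r (2 * n) 1 = countIn r (2 * n) 2) :
    ∀ m : ℕ, 1 ≤ m →
      Nat.nth (fun k => UDseq r k = 4) (m - 1) + 1 =
      countIn r (countIn r (posOf r 1 (posOf r 2 m)) 2) 1 + m := by
  intro m hm
  have hper : IsPeriodicWith r (2 * n) := hmin.2.1
  have hp1i : {k | r k = 1}.Infinite :=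
    infinite_of_periodic' r (2 * n) (by omega) hper 1 h2.2.1
  have hp2i : {k | r k = 2}.Infinite :=
    infinite_of_periodic' r (2 * n) (by omega) hper 2 h2.2.2
  have hor : ∀ t, r t = 1 ∨ r t = 2 := h2.1
  obtain ⟨j2, hj2⟩ : ∃ j, Nat.nth (fun k => r k = 2) (m - 1) = j := ⟨_, rfl⟩
  obtain ⟨tstar, hts⟩ : ∃ t, Nat.nth (fun k => r k = 1) j2 = t := ⟨_, rfl⟩
  have hrt : r tstar = 1 := hts ▸ Nat.nth_mem_of_infinite hp1i j2
  have hct : Nat.count (fun k => r k = 1) tstar = j2 :=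
    hts ▸ Nat.count_nth_of_infinite hp1i j2
  have hrj2 : r j2 = 2 := hj2 ▸ Nat.nth_mem_of_infinite hp2i (m - 1)
  have hcj2 : Nat.count (fun k => r k = 2) j2 = m - 1 :=
    hj2 ▸ Nat.count_nth_of_infinite hp2i (m - 1)
  -- value of `hitAt` according to the state at `t`
  have hitA : ∀ t, r t = 1 → hitAt true false r t =
      (if r (Nat.count (fun k => r k = 1) t) = 2 then some 4 else none) := by
    intro t ht
    rcases hor (Nat.count (fun k => r k = 1) t) with h | h <;>
      simp [hitAt, ht, countIn_eq_count, h]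
  have hitB : ∀ t, r t = 2 → hitAt true false r t =
      (if r (Nat.count (fun k => r k = 2) t) = 1 then some 5 else none) := by
    intro t ht
    have ht1 : ¬ (r t = 1) := by omega
    rcases hor (Nat.count (fun k => r k = 2) t) with h | h <;>
      simp [hitAt, ht1, countIn_eq_count, h]
  -- characterisation of the hit times
  have hTiff : ∀ t, ((hitAt true false r t).isSome = true) ↔
      ((r t = 1 ∧ r (Nat.count (fun k => r k = 1) t) = 2) ∨
       (r t = 2 ∧ r (Nat.count (fun k => r k = 2) t) = 1)) := by
    intro t
    rcases hor t with ht | ht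
    · rw [hitA t ht]
      rcases hor (Nat.count (fun k => r k = 1) t) with h | h <;>
        simp [h, ht] <;> omega
    · rw [hitB t ht]
      rcases hor (Nat.count (fun k => r k = 2) t) with h | h <;>
        simp [h, ht] <;> omega
  -- the set of hit times is infinite
  have himg : ((Nat.nth (fun k => r k = 1)) '' {i | r i = 2}).Infinite :=
    Set.Infinite.image ((Nat.nth_injective hp1i).injOn) hp2i
  have hpTi : {t | (hitAt true false r t).isSome = true}.Infinite := by
    refine himg.mono ?_
    rintro t ⟨i, hi, rfl⟩
    refine (hTiff _).2 (Or.inl ⟨Nat.nth_mem_of_infinite hp1i i, ?_⟩)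
    rw [Nat.count_nth_of_infinite hp1i i]; exact hi
  have hpAt : r tstar = 1 ∧ r (Nat.count (fun k => r k = 1) tstar) = 2 :=
    ⟨hrt, by rw [hct]; exact hrj2⟩
  have hpTt : (hitAt true false r tstar).isSome = true := (hTiff _).2 (Or.inl hpAt)
  -- the compressor output in terms of the hit times
  have hq : ∀ k, (UDseq r k = 4) ↔
      (r (Nat.nth (fun t => (hitAt true false r t).isSome = true) k) = 1 ∧
       r (Nat.count (fun j => r j = 1)
          (Nat.nth (fun t => (hitAt true false r t).isSome = true) k)) = 2) := by
    intro k
    have ht := Nat.nth_mem_of_infinite hpTi k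
    rcases (hTiff _).1 ht with ⟨h1, h2'⟩ | ⟨h1, h2'⟩
    · simp [UDseq, compSeq, hitA _ h1, h2', h1]
    · simp [UDseq, compSeq, hitB _ h1, h2', h1]
  have hnthK : Nat.nth (fun t => (hitAt true false r t).isSome = true)
      (Nat.count (fun t => (hitAt true false r t).isSome = true) tstar) = tstar :=
    Nat.nth_count hpTt
  have hqK : UDseq r (Nat.count (fun t => (hitAt true false r t).isSome = true) tstar) = 4 :=
    (hq _).2 (by rw [hnthK]; exact hpAt)
  -- counting the `4`-hits below `tstar`
  have hcA : Nat.count (fun t => r t = 1 ∧ r (Nat.count (fun k => r k = 1) t) = 2) tstar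
      = m - 1 := by
    have h := count_and_count (fun k => r k = 1) (fun j => r j = 2) hp1i tstar
    rw [hct, hcj2] at h
    exact h
  have hcB : Nat.count (fun t => r t = 2 ∧ r (Nat.count (fun k => r k = 2) t) = 1) tstar
      = Nat.count (fun j => r j = 1) (Nat.count (fun k => r k = 2) tstar) :=
    count_and_count (fun k => r k = 2) (fun j => r j = 1) hp2i tstar
  have hKsplit : Nat.count (fun t => (hitAt true false r t).isSome = true) tstar
      = (m - 1) + Nat.count (fun j => r j = 1) (Nat.count (fun k => r k = 2) tstar) := by
    rw [count_congr' hTiff,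
      count_or_disjoint _ _ (fun t h => by have := h.1.1; have := h.2.1; omega) tstar,
      hcA, hcB]
  have hcq : Nat.count (fun k => UDseq r k = 4)
      (Nat.count (fun t => (hitAt true false r t).isSome = true) tstar) = m - 1 := by
    rw [count_congr' hq]
    calc Nat.count (fun k =>
          r (Nat.nth (fun t => (hitAt true false r t).isSome = true) k) = 1 ∧
          r (Nat.count (fun j => r j = 1)
            (Nat.nth (fun t => (hitAt true false r t).isSome = true) k)) = 2)
          (Nat.count (fun t => (hitAt true false r t).isSome = true) tstar)
        = Nat.count (fun t => ((hitAt true false r t).isSome = true) ∧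
            (r t = 1 ∧ r (Nat.count (fun j => r j = 1) t) = 2)) tstar :=
          count_comp_nth (fun t => (hitAt true false r t).isSome = true)
            (fun t => r t = 1 ∧ r (Nat.count (fun j => r j = 1) t) = 2) hpTi tstar
      _ = Nat.count (fun t => r t = 1 ∧ r (Nat.count (fun k => r k = 1) t) = 2) tstar :=
          count_congr' (fun t => ⟨And.right,
            fun h' => ⟨(hTiff t).2 (Or.inl h'), h'⟩⟩) tstar
      _ = m - 1 := hcA
  have hnth : Nat.nth (fun k => UDseq r k = 4) (m - 1)
      = Nat.count (fun t => (hitAt true false r t).isSome = true) tstar := by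
    conv_lhs => rw [← hcq]
    exact Nat.nth_count hqK
  -- rewriting the right-hand side
  have hpos : posOf r 1 (posOf r 2 m) = tstar + 1 := by
    simp only [posOf, hj2, Nat.add_sub_cancel, hts]
  have hG : countIn r (tstar + 1) 2 = Nat.count (fun k => r k = 2) tstar := by
    rw [countIn_eq_count, Nat.count_succ, if_neg (by simp [hrt] : ¬ r tstar = 2)]
    omega
  rw [hpos, hG, countIn_eq_count, hnth, hKsplit]
  omega
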